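/- For every integer n ≥ 3, the digraph Γ(n,2) is strongly connected with diameter 2, and dim(Γ(n,2)) = f(n,2). -/

import Mathlib

/-!  Common definitions for weak metric dimension of digraphs.

A digraph is modelled by a vertex type `V` together with an arc relation
`A : V → V → Prop` (simplicity is expressed by `Irreflexive A`). -/

/-- There is a directed walk of length `n` from `x` to `y`. -/
def walkLen {V : Type*} (A : V → V → Prop) : ℕ → V → V → Prop
  | 0 => fun x y => x = y
  | n + 1 => fun x y => ∃ z, A x z ∧ walkLen A n z y

/-- `∂(x,y)`: the length of a shortest directed path from `x` to `y`. -/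
noncomputable def ddist {V : Type*} (A : V → V → Prop) (x y : V) : ℕ :=
  sInf {n | walkLen A n x y}

/-- The two way distance `∂̃(x,y) = (∂(x,y), ∂(y,x))`. -/
noncomputable def twoDist {V : Type*} (A : V → V → Prop) (x y : V) : ℕ × ℕ :=
  (ddist A x y, ddist A y x)

/-- Strong connectivity: any vertex can be reached from any vertex by a directed walk. -/
def IsStronglyConnected {V : Type*} (A : V → V → Prop) : Prop :=
  ∀ x y : V, ∃ n, walkLen A n x y

/-- `S` is a weakly resolving set: distinct vertices have different tuples of
two way distances from the vertices of `S`. -/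
def IsWeaklyResolving {V : Type*} (A : V → V → Prop) (S : Set V) : Prop :=
  ∀ u v : V, (∀ w ∈ S, twoDist A w u = twoDist A w v) → u = v

/-- The weak metric dimension: minimum cardinality of a weakly resolving set. -/
noncomputable def wdim {V : Type*} [Fintype V] (A : V → V → Prop) : ℕ :=
  sInf {k | ∃ S : Finset V, S.card = k ∧ IsWeaklyResolving A ↑S}

/-- The diameter: the maximum of `∂(x,y)` over all ordered pairs of vertices. -/
noncomputable def diam {V : Type*} [Fintype V] (A : V → V → Prop) : ℕ :=
  sSup {m | ∃ x y : V, ddist A x y = m}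

/-- `f(n,d)`: the least positive integer `k` with `k + d^(2k) ≥ n`. -/
noncomputable def fnd (n d : ℕ) : ℕ :=
  sInf {k | 0 < k ∧ n ≤ k + d ^ (2 * k)}

/-- An isomorphism from `(V, A)` onto `(W, B)` exists. -/
def IsIsoTo {V W : Type*} (A : V → V → Prop) (B : W → W → Prop) : Prop :=
  ∃ e : V ≃ W, ∀ x y, A x y ↔ B (e x) (e y)

/-- The digraph of Example 2.3: vertices `v_1, …, v_n` are the elements
`0, …, n-1` of `Fin n` (so `v_i` is `i - 1`). -/
def egArc (n d : ℕ) : Fin n → Fin n → Prop := fun x y =>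
  (x.val = n - 1 ∧ y.val ≤ n - d) ∨
  (x.val ≤ n - d ∧ y.val = n - d + 1) ∨
  (n - d + 1 ≤ x.val ∧ x.val ≤ n - 2 ∧ y.val = x.val + 1)

/-- The `r`-th (0-based) coordinate of the tuple `v_{j+1}` in Construction 2.4;
it lies in `{1, …, d}` and `j = Σ_r (coord r - 1) d^r`. -/
def gcoord (d j r : ℕ) : ℕ := j / d ^ r % d + 1

/-- The arc relation of Construction 2.4, with the `u`-vertices `Fin k` on the left
and the `v`-vertices `Fin m` on the right of the sum. -/
def gammaArcKM (d k : ℕ) {m : ℕ} : Fin k ⊕ Fin m → Fin k ⊕ Fin m → Prop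
  | .inl _, .inl _ => False
  | .inl i, .inr j => gcoord d j.val (2 * i.val) = 1
  | .inr j, .inl i => gcoord d j.val (2 * i.val + 1) = 1
  | .inr j, .inr l => j ≠ l ∧ ∀ r < k,
      gcoord d l.val (2 * r) ≤ gcoord d j.val (2 * r) + 1 ∧
      gcoord d j.val (2 * r + 1) ≤ gcoord d l.val (2 * r + 1) + 1

/-- The arc relation of `Γ̄`: `Γ` of Construction 2.4 together with symmetric arcs
between any two distinct `u`-vertices. -/
def gammaBarArcKM (d k : ℕ) {m : ℕ} : Fin k ⊕ Fin m → Fin k ⊕ Fin m → Prop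
  | .inl i, .inl i' => i ≠ i'
  | x, y => gammaArcKM d k x y

/-- The directed cycle of length `m` on `Fin m`. -/
def cycArc (m : ℕ) [NeZero m] : Fin m → Fin m → Prop := fun x y => y = x + 1

/-- `σ` is an automorphism of the digraph `(V, A)`. -/
def IsDigraphAuto {V : Type*} (A : V → V → Prop) (σ : V ≃ V) : Prop :=
  ∀ a b, A a b ↔ A (σ a) (σ b)

/-- Vertex-transitivity. -/
def IsVertexTransitive {V : Type*} (A : V → V → Prop) : Prop :=
  ∀ x y : V, ∃ σ : V ≃ V, IsDigraphAuto A σ ∧ σ x = y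

/-- Weak distance-transitivity. -/
def IsWeaklyDistanceTransitive {V : Type*} (A : V → V → Prop) : Prop :=
  ∀ x y x' y' : V, twoDist A x y = twoDist A x' y' →
    ∃ σ : V ≃ V, IsDigraphAuto A σ ∧ σ x = x' ∧ σ y = y'

/-- Weak distance-regularity. -/
noncomputable def IsWeaklyDistanceRegular {V : Type*} (A : V → V → Prop) : Prop :=
  ∀ i j : ℕ × ℕ, (∃ a b : V, twoDist A a b = i) → (∃ a b : V, twoDist A a b = j) →
    ∀ x y x' y' : V, twoDist A x y = twoDist A x' y' →
      Set.ncard {z : V | twoDist A x z = i ∧ twoDist A z y = j} =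
      Set.ncard {z : V | twoDist A x' z = i ∧ twoDist A z y' = j}

/-- The complete digraph `K_t`. -/
def Krel (t : ℕ) : Fin t → Fin t → Prop := fun x y => x ≠ y

/-- The null digraph `K̄_t`. -/
def Nrel (t : ℕ) : Fin t → Fin t → Prop := fun _ _ => False

/-- The directed path `P_2` of length `1`. -/
def P2rel : Fin 2 → Fin 2 → Prop := fun x y => x = 0 ∧ y = 1

/-- The digraph `G_1` on `{0,1,2}` with arcs `(0,1),(1,2),(2,1),(2,0)`. -/
def G1rel : Fin 3 → Fin 3 → Prop := fun x y =>
  (x = 0 ∧ y = 1) ∨ (x = 1 ∧ y = 2) ∨ (x = 2 ∧ y = 1) ∨ (x = 2 ∧ y = 0)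

/-- The digraph `G_2` on `{0,1,2}` with arcs `(0,1),(1,0),(1,2),(2,1),(2,0)`. -/
def G2rel : Fin 3 → Fin 3 → Prop := fun x y =>
  (x = 0 ∧ y = 1) ∨ (x = 1 ∧ y = 0) ∨ (x = 1 ∧ y = 2) ∨ (x = 2 ∧ y = 1) ∨ (x = 2 ∧ y = 0)

/-- The generalized lexicographic product `G[H₀, H₁, H₂]` for a digraph `G` on `{0,1,2}`. -/
def glex3 {α β γ : Type*} (G : Fin 3 → Fin 3 → Prop)
    (H0 : α → α → Prop) (H1 : β → β → Prop) (H2 : γ → γ → Prop) :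
    α ⊕ β ⊕ γ → α ⊕ β ⊕ γ → Prop
  | .inl x, .inl y => H0 x y
  | .inl _, .inr (.inl _) => G 0 1
  | .inl _, .inr (.inr _) => G 0 2
  | .inr (.inl _), .inl _ => G 1 0
  | .inr (.inl x), .inr (.inl y) => H1 x y
  | .inr (.inl _), .inr (.inr _) => G 1 2
  | .inr (.inr _), .inl _ => G 2 0
  | .inr (.inr _), .inr (.inl _) => G 2 1
  | .inr (.inr x), .inr (.inr y) => H2 x y

/-- A clique in a digraph: the two way distance between any two distinct
vertices of `S` is `(1,1)`. -/
noncomputable def DClique {V : Type*} (A : V → V → Prop) (S : Set V) : Prop :=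
  ∀ u ∈ S, ∀ v ∈ S, u ≠ v → twoDist A u v = (1, 1)

/-- An independent set in a digraph: no arcs inside `R`. -/
def DIndependent {V : Type*} (A : V → V → Prop) (R : Set V) : Prop :=
  ∀ u ∈ R, ∀ v ∈ R, ¬ A u v


section aux
variable {V : Type*} {A : V → V → Prop}

lemma walkLen_one {x y : V} : walkLen A 1 x y ↔ A x y := by
  simp [walkLen]

lemma walkLen_two {x y : V} : walkLen A 2 x y ↔ ∃ z, A x z ∧ A z y := by
  simp [walkLen]

lemma ddist_le {x y : V} {n : ℕ} (h : walkLen A n x y) : ddist A x y ≤ n := Nat.sInf_le h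

lemma ddist_self (x : V) : ddist A x x = 0 := Nat.sInf_eq_zero.2 (Or.inl rfl)

lemma ddist_eq_one {x y : V} (h0 : x ≠ y) (h : A x y) : ddist A x y = 1 := by
  have h1 : ddist A x y ≤ 1 := ddist_le (walkLen_one.2 h)
  have h2 : ddist A x y ≠ 0 := by
    intro h2
    rcases Nat.sInf_eq_zero.1 h2 with h3 | h3
    · exact h0 h3
    · exact (Set.eq_empty_iff_forall_notMem.1 h3) 1 (walkLen_one.2 h)
  omega

lemma ddist_eq_two {x y : V} (h0 : x ≠ y) (h1 : ¬ A x y) (h2 : ∃ z, A x z ∧ A z y) :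
    ddist A x y = 2 := by
  have hle : ddist A x y ≤ 2 := ddist_le (walkLen_two.2 h2)
  have hne : {n | walkLen A n x y}.Nonempty := ⟨2, walkLen_two.2 h2⟩
  have hd : walkLen A (ddist A x y) x y := Nat.sInf_mem hne
  have h3 : ddist A x y = 0 ∨ ddist A x y = 1 ∨ ddist A x y = 2 := by omega
  rcases h3 with h3 | h3 | h3
  · rw [h3] at hd; exact absurd hd h0
  · rw [h3] at hd; exact absurd (walkLen_one.1 hd) h1
  · exact h3

end aux

section graph
variable {k m : ℕ}

lemma gcoord_two (j p : ℕ) : gcoord 2 j p = 1 ↔ Nat.testBit j p = false := by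
  have h := Nat.mod_two_eq_zero_or_one (j / 2 ^ p)
  simp only [gcoord, Nat.testBit_eq_decide_div_mod_eq, decide_eq_false_iff_not]
  omega

lemma gcoord_le2 (a q : ℕ) : gcoord 2 a q ≤ 2 := by
  have h := Nat.mod_lt (a / 2 ^ q) (show 0 < 2 by norm_num)
  unfold gcoord; omega

lemma gcoord_pos (a q : ℕ) : 1 ≤ gcoord 2 a q := Nat.le_add_left _ _

lemma arc_ll (i i' : Fin k) : ¬ gammaArcKM 2 k (m := m) (.inl i) (.inl i') := fun h => h

lemma arc_lr (i : Fin k) (j : Fin m) :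
    gammaArcKM 2 k (.inl i) (.inr j) ↔ Nat.testBit j.val (2 * i.val) = false :=
  gcoord_two _ _

lemma arc_rl (i : Fin k) (j : Fin m) :
    gammaArcKM 2 k (.inr j) (.inl i) ↔ Nat.testBit j.val (2 * i.val + 1) = false :=
  gcoord_two _ _

lemma arc_rr (j l : Fin m) : gammaArcKM 2 k (.inr j) (.inr l) ↔ j ≠ l := by
  constructor
  · exact fun h => h.1
  · intro h
    refine ⟨h, fun r _ => ⟨?_, ?_⟩⟩
    · have h1 := gcoord_le2 l.val (2 * r)
      have h2 := gcoord_pos j.val (2 * r)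
      omega
    · have h1 := gcoord_le2 j.val (2 * r + 1)
      have h2 := gcoord_pos l.val (2 * r + 1)
      omega

variable (hm : 0 < m)
include hm

lemma arc_to_v0 (i : Fin k) : gammaArcKM 2 k (m := m) (.inl i) (.inr ⟨0, hm⟩) :=
  (arc_lr i ⟨0, hm⟩).2 (Nat.zero_testBit _)

lemma arc_from_v0 (i : Fin k) : gammaArcKM 2 k (m := m) (.inr ⟨0, hm⟩) (.inl i) :=
  (arc_rl i ⟨0, hm⟩).2 (Nat.zero_testBit _)

lemma ddist_ll {i i' : Fin k} (h : i ≠ i') :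
    ddist (gammaArcKM 2 k (m := m)) (.inl i) (.inl i') = 2 := by
  refine ddist_eq_two (by simp [h]) (arc_ll i i') ⟨.inr ⟨0, hm⟩, arc_to_v0 hm i, arc_from_v0 hm i'⟩

lemma ddist_lr (i : Fin k) (j : Fin m) :
    ddist (gammaArcKM 2 k (m := m)) (.inl i) (.inr j) =
      if Nat.testBit j.val (2 * i.val) = false then 1 else 2 := by
  by_cases hb : Nat.testBit j.val (2 * i.val) = false
  · rw [if_pos hb]
    exact ddist_eq_one (by simp) ((arc_lr i j).2 hb)
  · rw [if_neg hb]
    have hj : (⟨0, hm⟩ : Fin m) ≠ j := by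
      intro h; rw [← h] at hb; exact hb (Nat.zero_testBit _)
    refine ddist_eq_two (by simp) (fun h => hb ((arc_lr i j).1 h))
      ⟨.inr ⟨0, hm⟩, arc_to_v0 hm i, (arc_rr _ _).2 hj⟩

lemma ddist_rl (i : Fin k) (j : Fin m) :
    ddist (gammaArcKM 2 k (m := m)) (.inr j) (.inl i) =
      if Nat.testBit j.val (2 * i.val + 1) = false then 1 else 2 := by
  by_cases hb : Nat.testBit j.val (2 * i.val + 1) = false
  · rw [if_pos hb]
    exact ddist_eq_one (by simp) ((arc_rl i j).2 hb)
  · rw [if_neg hb]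
    have hj : j ≠ (⟨0, hm⟩ : Fin m) := by
      intro h; rw [h] at hb; exact hb (Nat.zero_testBit _)
    refine ddist_eq_two (by simp) (fun h => hb ((arc_rl i j).1 h))
      ⟨.inr ⟨0, hm⟩, (arc_rr _ _).2 hj, arc_from_v0 hm i⟩

omit hm in
lemma ddist_rr {j l : Fin m} (h : j ≠ l) :
    ddist (gammaArcKM 2 k (m := m)) (.inr j) (.inr l) = 1 :=
  ddist_eq_one (by simp [h]) ((arc_rr j l).2 h)

lemma exists_walkLen_le_two (x y : Fin k ⊕ Fin m) :
    ∃ nn ≤ 2, walkLen (gammaArcKM 2 k (m := m)) nn x y := by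
  by_cases hxy : x = y
  · exact ⟨0, by omega, hxy⟩
  by_cases harc : gammaArcKM 2 k (m := m) x y
  · exact ⟨1, by omega, walkLen_one.2 harc⟩
  refine ⟨2, le_refl _, walkLen_two.2 ?_⟩
  match x, y with
  | .inl i, .inl i' => exact ⟨.inr ⟨0, hm⟩, arc_to_v0 hm i, arc_from_v0 hm i'⟩
  | .inl i, .inr j =>
    have hj : (⟨0, hm⟩ : Fin m) ≠ j := by
      intro h
      exact harc ((arc_lr i j).2 (by rw [← h]; exact Nat.zero_testBit _))
    exact ⟨.inr ⟨0, hm⟩, arc_to_v0 hm i, (arc_rr _ _).2 hj⟩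
  | .inr j, .inl i =>
    have hj : j ≠ (⟨0, hm⟩ : Fin m) := by
      intro h
      exact harc ((arc_rl i j).2 (by rw [h]; exact Nat.zero_testBit _))
    exact ⟨.inr ⟨0, hm⟩, (arc_rr _ _).2 hj, arc_from_v0 hm i⟩
  | .inr j, .inr l => exact absurd ((arc_rr j l).2 (by simpa using hxy)) harc

lemma ddist_le_two (x y : Fin k ⊕ Fin m) :
    ddist (gammaArcKM 2 k (m := m)) x y ≤ 2 := by
  obtain ⟨nn, hnn, hw⟩ := exists_walkLen_le_two hm x y
  exact le_trans (ddist_le hw) hnn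

end graph

lemma ite12 {b c : Bool} (h : (if b = false then 1 else 2 : ℕ) = if c = false then 1 else 2) :
    b = c := by
  cases b <;> cases c <;> simp_all

lemma ite10 {b c : Bool} (h : (if b then 1 else 0 : ℕ) = if c then 1 else 0) : b = c := by
  cases b <;> cases c <;> simp_all

lemma eq_of_bits {k a b : ℕ} (ha : a < 2 ^ (2 * k)) (hb : b < 2 ^ (2 * k))
    (h : ∀ i < k, Nat.testBit a (2 * i) = Nat.testBit b (2 * i) ∧
      Nat.testBit a (2 * i + 1) = Nat.testBit b (2 * i + 1)) : a = b := by
  apply Nat.eq_of_testBit_eq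
  intro p
  by_cases hp : p < 2 * k
  · obtain ⟨h1, h2⟩ := h (p / 2) (by omega)
    have hor : 2 * (p / 2) = p ∨ 2 * (p / 2) + 1 = p := by omega
    rcases hor with he | he
    · rw [← he]; exact h1
    · rw [← he]; exact h2
  · have hf : ∀ x, x < 2 ^ (2 * k) → Nat.testBit x p = false := by
      intro x hx
      apply Nat.testBit_eq_false_of_lt
      exact lt_of_lt_of_le hx (Nat.pow_le_pow_right (by norm_num) (by omega))
    rw [hf a ha, hf b hb]

/-- Lemma 2.5(ii). For `n ≥ 3`, the digraph `Γ(n,2)` is strongly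
connected with diameter `2` and `dim(Γ(n,2)) = f(n,2)`. -/
theorem gamma_n2_dim (n : ℕ) (hn : 3 ≤ n) :
    IsStronglyConnected (gammaArcKM 2 (fnd n 2) (m := n - fnd n 2)) ∧
    diam (gammaArcKM 2 (fnd n 2) (m := n - fnd n 2)) = 2 ∧
    wdim (gammaArcKM 2 (fnd n 2) (m := n - fnd n 2)) = fnd n 2 := by
  classical
  have hfin : fnd n 2 ∈ {x | 0 < x ∧ n ≤ x + 2 ^ (2 * x)} :=
    Nat.sInf_mem ⟨n, ⟨by omega, Nat.le_add_right _ _⟩⟩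
  have hkle' : fnd n 2 ≤ n := Nat.sInf_le ⟨by omega, Nat.le_add_right _ _⟩
  set k := fnd n 2 with hkdef
  set m := n - k with hmdef
  obtain ⟨hk1, hkn⟩ := hfin
  have hmup : m ≤ 2 ^ (2 * k) := by omega
  have hmlow : 2 ≤ k → 2 ^ (2 * (k - 1)) + k ≤ n := by
    intro h2
    have hnm : (k - 1) ∉ {x | 0 < x ∧ n ≤ x + 2 ^ (2 * x)} :=
      Nat.notMem_of_lt_sInf (show k - 1 < k by omega)
    have : ¬ (n ≤ (k - 1) + 2 ^ (2 * (k - 1))) := fun hle => hnm ⟨by omega, hle⟩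
    omega
  have hm2 : 2 ≤ m := by
    rcases Nat.lt_or_ge k 2 with h | h
    · omega
    · have h1 := hmlow h
      have h2 : (4 : ℕ) ≤ 2 ^ (2 * (k - 1)) := by
        calc (4 : ℕ) = 2 ^ 2 := rfl
        _ ≤ 2 ^ (2 * (k - 1)) := Nat.pow_le_pow_right (by norm_num) (by omega)
      omega
  have hm0 : 0 < m := by omega
  refine ⟨?_, ?_, ?_⟩
  · -- strong connectivity
    intro x y
    obtain ⟨nn, _, hw⟩ := exists_walkLen_le_two hm0 x y
    exact ⟨nn, hw⟩
  · -- diameter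
    apply le_antisymm
    · refine csSup_le ?_ ?_
      · exact ⟨0, Sum.inl ⟨0, hk1⟩, Sum.inl ⟨0, hk1⟩, ddist_self _⟩
      · rintro d ⟨x, y, rfl⟩
        exact ddist_le_two hm0 x y
    · apply le_csSup
      · exact ⟨2, by rintro d ⟨x, y, rfl⟩; exact ddist_le_two hm0 x y⟩
      · refine ⟨Sum.inl ⟨0, hk1⟩, Sum.inr ⟨1, by omega⟩, ?_⟩
        rw [ddist_lr hm0]
        show (if Nat.testBit 1 (2 * 0) = false then 1 else 2) = 2
        norm_num
  · -- weak metric dimension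
    have hup : k ∈ {s | ∃ S : Finset (Fin k ⊕ Fin m), S.card = s ∧
        IsWeaklyResolving (gammaArcKM 2 k (m := m)) ↑S} := by
      refine ⟨Finset.univ.image Sum.inl, ?_, ?_⟩
      · rw [Finset.card_image_of_injective _ Sum.inl_injective, Finset.card_univ,
          Fintype.card_fin]
      · intro u v h
        have h' : ∀ i : Fin k, twoDist (gammaArcKM 2 k (m := m)) (Sum.inl i) u =
            twoDist (gammaArcKM 2 k (m := m)) (Sum.inl i) v := fun i => h _ (by simp)
        match u, v with
        | .inl i, .inl i' =>
          by_cases hii : i = i'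
          · rw [hii]
          · have hfst : ddist (gammaArcKM 2 k (m := m)) (Sum.inl i) (Sum.inl i) =
                ddist (gammaArcKM 2 k (m := m)) (Sum.inl i) (Sum.inl i') :=
              congrArg Prod.fst (h' i)
            rw [ddist_self, ddist_ll hm0 hii] at hfst
            exact absurd hfst (by norm_num)
        | .inl i, .inr j =>
          have hfst : ddist (gammaArcKM 2 k (m := m)) (Sum.inl i) (Sum.inl i) =
              ddist (gammaArcKM 2 k (m := m)) (Sum.inl i) (Sum.inr j) :=
            congrArg Prod.fst (h' i)
          rw [ddist_self, ddist_lr hm0] at hfst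
          split_ifs at hfst
        | .inr j, .inl i =>
          have hfst : ddist (gammaArcKM 2 k (m := m)) (Sum.inl i) (Sum.inr j) =
              ddist (gammaArcKM 2 k (m := m)) (Sum.inl i) (Sum.inl i) :=
            congrArg Prod.fst (h' i)
          rw [ddist_self, ddist_lr hm0] at hfst
          split_ifs at hfst
        | .inr j, .inr j' =>
          refine congrArg Sum.inr (Fin.ext (eq_of_bits (k := k)
            (lt_of_lt_of_le j.isLt hmup) (lt_of_lt_of_le j'.isLt hmup) ?_))
          intro i hi
          have hfst : ddist (gammaArcKM 2 k (m := m)) (Sum.inl ⟨i, hi⟩) (Sum.inr j) =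
              ddist (gammaArcKM 2 k (m := m)) (Sum.inl ⟨i, hi⟩) (Sum.inr j') :=
            congrArg Prod.fst (h' ⟨i, hi⟩)
          have hsnd : ddist (gammaArcKM 2 k (m := m)) (Sum.inr j) (Sum.inl ⟨i, hi⟩) =
              ddist (gammaArcKM 2 k (m := m)) (Sum.inr j') (Sum.inl ⟨i, hi⟩) :=
            congrArg Prod.snd (h' ⟨i, hi⟩)
          rw [ddist_lr hm0, ddist_lr hm0] at hfst
          rw [ddist_rl hm0, ddist_rl hm0] at hsnd
          exact ⟨ite12 hfst, ite12 hsnd⟩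
    have hlow : ∀ s ∈ {s | ∃ S : Finset (Fin k ⊕ Fin m), S.card = s ∧
        IsWeaklyResolving (gammaArcKM 2 k (m := m)) ↑S}, k ≤ s := by
      rintro s ⟨S, hcard, hres⟩
      by_contra hsk
      push_neg at hsk
      set I := Finset.univ.filter (fun i : Fin k => Sum.inl i ∈ S) with hIdef
      set J := Finset.univ.filter (fun j : Fin m => Sum.inr j ∈ S) with hJdef
      have hmemI : ∀ i : Fin k, Sum.inl i ∈ S → i ∈ I :=
        fun i h => Finset.mem_filter.2 ⟨Finset.mem_univ _, h⟩
      have hmemJ : ∀ j : Fin m, Sum.inr j ∈ S → j ∈ J :=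
        fun j h => Finset.mem_filter.2 ⟨Finset.mem_univ _, h⟩
      have hSw : ∀ w ∈ S, (∃ i ∈ I, w = Sum.inl i) ∨ (∃ j ∈ J, w = Sum.inr j) := by
        intro w hw
        match w with
        | .inl i => exact Or.inl ⟨i, hmemI i hw, rfl⟩
        | .inr j => exact Or.inr ⟨j, hmemJ j hw, rfl⟩
      have hIJcard : I.card + J.card ≤ s := by
        have hsub : I.image Sum.inl ∪ J.image Sum.inr ⊆ S := by
          intro x hx
          rcases Finset.mem_union.1 hx with hx | hx
          · obtain ⟨i, hi, rfl⟩ := Finset.mem_image.1 hx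
            exact (Finset.mem_filter.1 hi).2
          · obtain ⟨j, hj, rfl⟩ := Finset.mem_image.1 hx
            exact (Finset.mem_filter.1 hj).2
        have hdisj : Disjoint (I.image Sum.inl) (J.image Sum.inr) := by
          rw [Finset.disjoint_left]
          rintro x hx hx'
          obtain ⟨i, _, rfl⟩ := Finset.mem_image.1 hx
          obtain ⟨j, _, hj⟩ := Finset.mem_image.1 hx'
          exact Sum.inl_ne_inr hj.symm
        calc I.card + J.card
            = (I.image Sum.inl).card + (J.image Sum.inr).card := by
              rw [Finset.card_image_of_injective _ Sum.inl_injective,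
                Finset.card_image_of_injective _ Sum.inr_injective]
          _ = (I.image Sum.inl ∪ J.image Sum.inr).card :=
              (Finset.card_union_of_disjoint hdisj).symm
          _ ≤ S.card := Finset.card_le_card hsub
          _ = s := hcard
      have hkey : ∀ j j' : Fin m, j ∉ J → j' ∉ J →
          (∀ i ∈ I, Nat.testBit j.val (2 * i.val) = Nat.testBit j'.val (2 * i.val) ∧
            Nat.testBit j.val (2 * i.val + 1) = Nat.testBit j'.val (2 * i.val + 1)) →
          j = j' := by
        intro j j' hj hj' hb
        have heq := hres (Sum.inr j) (Sum.inr j') ?_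
        · exact Sum.inr_injective heq
        intro w hw
        rcases hSw w (Finset.mem_coe.1 hw) with ⟨i, hi, rfl⟩ | ⟨l, hl, rfl⟩
        · obtain ⟨h1, h2⟩ := hb i hi
          unfold twoDist
          rw [ddist_lr hm0, ddist_lr hm0, ddist_rl hm0, ddist_rl hm0, h1, h2]
        · have hlj : l ≠ j := fun h => hj (h ▸ hl)
          have hlj' : l ≠ j' := fun h => hj' (h ▸ hl)
          unfold twoDist
          rw [ddist_rr hlj, ddist_rr hlj', ddist_rr (Ne.symm hlj), ddist_rr (Ne.symm hlj')]
      have hcount : m - J.card ≤ 2 ^ (2 * I.card) := by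
        set g : Fin m → (Fin k → ℕ × ℕ) := fun j i =>
          if i ∈ I then ((if Nat.testBit j.val (2 * i.val) then 1 else 0),
            (if Nat.testBit j.val (2 * i.val + 1) then 1 else 0)) else (0, 0) with hgdef
        set T := Fintype.piFinset (fun i : Fin k =>
          if i ∈ I then ({0, 1} ×ˢ {0, 1} : Finset (ℕ × ℕ)) else {(0, 0)}) with hTdef
        have hmaps : ∀ j ∈ (Jᶜ : Finset (Fin m)), g j ∈ T := by
          intro j _
          rw [hTdef, Fintype.mem_piFinset]
          intro i
          by_cases hi : i ∈ I
          · simp only [hgdef, if_pos hi, Finset.mem_product]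
            constructor <;> · split <;> simp
          · simp [hgdef, hi]
        have hinj : Set.InjOn g ↑(Jᶜ : Finset (Fin m)) := by
          intro j hj j' hj' hgj
          apply hkey j j' (by simpa using hj) (by simpa using hj')
          intro i hi
          have hfi := congrFun hgj i
          simp only [hgdef, if_pos hi, Prod.mk.injEq] at hfi
          exact ⟨ite10 hfi.1, ite10 hfi.2⟩
        have hle := Finset.card_le_card_of_injOn g hmaps hinj
        have hTcard : T.card = 2 ^ (2 * I.card) := by
          rw [hTdef, Fintype.card_piFinset]
          have hci : ∀ i : Fin k,
              (if i ∈ I then ({0, 1} ×ˢ {0, 1} : Finset (ℕ × ℕ)) else {(0, 0)}).card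
                = if i ∈ I then 4 else 1 := by
            intro i; split
            · decide
            · simp
          rw [Finset.prod_congr rfl (fun i _ => hci i), Finset.prod_ite_mem,
            Finset.univ_inter, Finset.prod_const]
          rw [show (4 : ℕ) = 2 ^ 2 from rfl, ← pow_mul]
        rw [Finset.card_compl, hTcard, Fintype.card_fin] at hle
        exact hle
      rcases Nat.lt_or_ge k 2 with hk2 | hk2
      · -- k = 1, so s = 0 and S is empty
        have hs0 : s = 0 := by omega
        have hSe : S = ∅ := Finset.card_eq_zero.1 (by rw [hcard, hs0])
        have h01 := hres (Sum.inr ⟨0, by omega⟩) (Sum.inr ⟨1, by omega⟩)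
          (by intro w hw; rw [hSe] at hw; simp at hw)
        have := Sum.inr_injective h01
        simp [Fin.ext_iff] at this
      · -- k ≥ 2
        have hml := hmlow hk2
        have hmlow' : 2 ^ (2 * (k - 1)) ≤ m := by omega
        have haI : I.card = k - 1 := by
          by_contra hne
          have ha2 : I.card ≤ k - 2 := by omega
          have h1 : 2 ^ (2 * I.card) ≤ 2 ^ (2 * (k - 2)) :=
            Nat.pow_le_pow_right (by norm_num) (by omega)
          have h2 : 2 ^ (2 * (k - 1)) = 4 * 2 ^ (2 * (k - 2)) := by
            rw [show (4 : ℕ) = 2 ^ 2 from rfl, ← pow_add]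
            congr 1
            omega
          have h3 : k - 2 < 2 ^ (2 * (k - 2)) :=
            lt_of_lt_of_le (Nat.lt_two_pow_self (n := k - 2))
              (Nat.pow_le_pow_right (by norm_num) (by omega))
          omega
        have hbJ : J.card = 0 := by omega
        have hJe : J = ∅ := Finset.card_eq_zero.1 hbJ
        have hmeq : m = 2 ^ (2 * (k - 1)) := by
          rw [haI, hbJ] at hcount
          omega
        have hIc : (Iᶜ : Finset (Fin k)).Nonempty := by
          rw [← Finset.card_pos, Finset.card_compl, Fintype.card_fin]
          omega
        obtain ⟨i0, hi0c⟩ := hIc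
        have hi0 : i0 ∉ I := Finset.mem_compl.1 hi0c
        by_cases hi0v : i0.val = k - 1
        · -- collide u_{i0} with v_{m-1}
          have hmm : m - 1 < m := by omega
          have heq := hres (Sum.inl i0) (Sum.inr ⟨m - 1, hmm⟩) ?_
          · exact absurd heq (by simp)
          intro w hw
          rcases hSw w (Finset.mem_coe.1 hw) with ⟨i, hi, rfl⟩ | ⟨l, hl, rfl⟩
          swap
          · rw [hJe] at hl; simp at hl
          have hii0 : i ≠ i0 := fun h => hi0 (h ▸ hi)
          have hiv : i.val < k - 1 := by
            have h1 := i.isLt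
            have h2 : i.val ≠ k - 1 := fun h => hii0 (Fin.ext (by omega))
            omega
          have hb1 : Nat.testBit (m - 1) (2 * i.val) = true := by
            rw [hmeq, Nat.testBit_two_pow_sub_one]
            simp only [decide_eq_true_eq]
            omega
          have hb2 : Nat.testBit (m - 1) (2 * i.val + 1) = true := by
            rw [hmeq, Nat.testBit_two_pow_sub_one]
            simp only [decide_eq_true_eq]
            omega
          unfold twoDist
          rw [ddist_ll hm0 hii0, ddist_ll hm0 (Ne.symm hii0), ddist_lr hm0, ddist_rl hm0]
          show ((2 : ℕ), (2 : ℕ)) = (if Nat.testBit (m - 1) (2 * i.val) = false then 1 else 2,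
            if Nat.testBit (m - 1) (2 * i.val + 1) = false then 1 else 2)
          rw [hb1, hb2]
          simp
        · -- collide v_0 with v_{2^(2 i0)}
          have hi0lt : i0.val < k - 1 := by
            have := i0.isLt
            omega
          have hlt : 2 ^ (2 * i0.val) < m := by
            rw [hmeq]
            exact Nat.pow_lt_pow_right (by norm_num) (by omega)
          have heq := hkey ⟨0, hm0⟩ ⟨2 ^ (2 * i0.val), hlt⟩
            (by simp [hJe]) (by simp [hJe]) ?_
          · have hv := Fin.mk.injEq .. ▸ heq
            have h2p : 0 < 2 ^ (2 * i0.val) := Nat.pow_pos (by norm_num)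
            have : (0 : ℕ) = 2 ^ (2 * i0.val) := congrArg Fin.val heq
            omega
          intro i hi
          have hii0 : i ≠ i0 := fun h => hi0 (h ▸ hi)
          have hvne : i.val ≠ i0.val := fun h => hii0 (Fin.ext h)
          constructor
          · show Nat.testBit 0 (2 * i.val) = Nat.testBit (2 ^ (2 * i0.val)) (2 * i.val)
            rw [Nat.zero_testBit, Nat.testBit_two_pow,
              decide_eq_false (show ¬(2 * i0.val = 2 * i.val) by omega)]
          · show Nat.testBit 0 (2 * i.val + 1) = Nat.testBit (2 ^ (2 * i0.val)) (2 * i.val + 1)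
            rw [Nat.zero_testBit, Nat.testBit_two_pow,
              decide_eq_false (show ¬(2 * i0.val = 2 * i.val + 1) by omega)]
    exact le_antisymm (Nat.sInf_le hup) (le_csInf ⟨k, hup⟩ hlow)
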